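/- arXiv:2504.03272 — 3 statements merged into one kernel-verified Lean document; each statement's English description precedes it below -/
import Mathlib

section
/- Suppose the ego car is behind at position x_e with velocity 0 ≤ v_e, acceleration a_e with B_min ≤ a_e, reacts after at most time T > 0, and v_e + a_e·T ≥ 0. If x_e - v_e²/(2·B_min) + (−a_e/B_min + 1)·((a_e/2)·T² + T·v_e) + L < x_l - v_l²/(2·B_max), then after driving for any time 0 ≤ t ≤ T with acceleration a_e (reaching position x_e' = x_e + v_e·t + (a_e/2)·t² and velocity v_e' = v_e + a_e·t ≥ 0), while the front car brakes at B_max for time t (clamped at its stop), the condition x_e' - (v_e')²/(2·B_min) + L < x_l' - (v_l')²/(2·B_max) still holds, where x_l', v_l' are the front car's position and velocity after time t. -/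
/-- Position under constant deceleration, clamped at the stopping time. -/
noncomputable def brakePos (x v a t : ℝ) : ℝ :=
  if t ≤ -v / a then x + v * t + (a / 2) * t ^ 2 else x - v ^ 2 / (2 * a)

/-- Velocity under constant deceleration, clamped at 0. -/
noncomputable def brakeVel (v a t : ℝ) : ℝ :=
  if t ≤ -v / a then v + a * t else 0

/-- The correction-term safety condition is preserved throughout a control cycle. -/
theorem correction_preserved (xe ve ae xl vl Bmin Bmax T L : ℝ)
    (hve : 0 ≤ ve) (hvl : 0 ≤ vl) (hBmax : Bmax ≤ Bmin) (hBmin : Bmin < 0)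
    (hT : 0 < T) (hL : 0 < L) (ha : Bmin ≤ ae) (haT : ve + ae * T ≥ 0)
    (hsafe : xe - ve ^ 2 / (2 * Bmin)
        + (-ae / Bmin + 1) * ((ae / 2) * T ^ 2 + T * ve) + L
        < xl - vl ^ 2 / (2 * Bmax)) :
    ∀ t : ℝ, 0 ≤ t → t ≤ T →
      0 ≤ ve + ae * t ∧
      (xe + ve * t + (ae / 2) * t ^ 2) - (ve + ae * t) ^ 2 / (2 * Bmin) + L
        < brakePos xl vl Bmax t - (brakeVel vl Bmax t) ^ 2 / (2 * Bmax) := by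
  intro t ht htT
  have hBmax0 : Bmax < 0 := lt_of_le_of_lt hBmax hBmin
  have hBmaxne : Bmax ≠ 0 := ne_of_lt hBmax0
  have hBminne : Bmin ≠ 0 := ne_of_lt hBmin
  have hvt : 0 ≤ ve + ae * t := by
    rcases le_or_gt 0 ae with h | h
    · nlinarith
    · nlinarith
  refine ⟨hvt, ?_⟩
  have hg : brakePos xl vl Bmax t - (brakeVel vl Bmax t) ^ 2 / (2 * Bmax)
      = xl - vl ^ 2 / (2 * Bmax) := by
    unfold brakePos brakeVel
    split
    · field_simp
      ring
    · norm_num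
  rw [hg]
  have hfac : 0 ≤ 1 - ae / Bmin := by
    have h1 : 1 - ae / Bmin = (ae - Bmin) / (-Bmin) := by
      rw [eq_div_iff (by linarith : (-Bmin) ≠ (0:ℝ))]
      field_simp
      ring
    rw [h1]
    exact div_nonneg (by linarith) (by linarith)
  have hkey : (1 - ae / Bmin) * (ve * t + ae * t ^ 2 / 2)
      ≤ (1 - ae / Bmin) * (ve * T + ae * T ^ 2 / 2) := by
    apply mul_le_mul_of_nonneg_left _ hfac
    nlinarith
  have expand : ∀ s : ℝ, xe + ve * s + (ae / 2) * s ^ 2 - (ve + ae * s) ^ 2 / (2 * Bmin)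
      = xe - ve ^ 2 / (2 * Bmin) + (1 - ae / Bmin) * (ve * s + ae * s ^ 2 / 2) := by
    intro s
    field_simp
    ring
  have hcorr : (-ae / Bmin + 1) * ((ae / 2) * T ^ 2 + T * ve)
      = (1 - ae / Bmin) * (ve * T + ae * T ^ 2 / 2) := by ring
  have := expand t
  linarith [hsafe, hkey, expand t, hcorr ▸ hsafe]
end

section
/- Formula safe_back is an inductive invariant of the braking dynamics: if B_max ≤ B_min < 0, a_e ≤ B_min, v_e, v_l ≥ 0, x_e + L ≤ x_l, and x_e - v_e²/(2·B_min) + L < x_l - v_l²/(2·B_max), then for any time t ≥ 0 during which the ego car evolves with acceleration a_e (velocity clamped at 0) and the front car evolves with acceleration B_max (velocity clamped at 0), the resulting state (x_e', v_e', x_l', v_l') again satisfies x_e' + L ≤ x_l' and x_e' - (v_e')²/(2·B_min) + L < x_l' - (v_l')²/(2·B_max). -/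
/-- Case A of the position comparison: ego's clamped velocity dominates. -/
lemma main1A (xe ve a xl vl m M L t : ℝ) (ham : a ≤ m) (hm : m < 0) (hMm : M ≤ m)
    (hve : 0 ≤ ve) (ht : 0 ≤ t) (hu : 0 ≤ ve + a * t) (hw : 0 ≤ vl + M * t)
    (hc : vl + M * t ≤ ve + a * t)
    (K : m * vl ^ 2 - M * ve ^ 2 < 2 * m * M * (xl - xe - L)) :
    xe + ve * t + a / 2 * t ^ 2 + L ≤ xl + vl * t + M / 2 * t ^ 2 := by
  have hM : M < 0 := lt_of_le_of_lt hMm hm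
  have f1 : 0 ≤ (-M) * ((m - a) * (t * (2 * ve + a * t))) := by
    apply mul_nonneg (by linarith)
    apply mul_nonneg (by linarith)
    apply mul_nonneg ht (by linarith)
  have f2 : 0 ≤ (-m) * ((ve + a * t - (vl + M * t)) * (ve + a * t + (vl + M * t))) := by
    apply mul_nonneg (by linarith)
    apply mul_nonneg (by linarith) (by linarith)
  have f3 : 0 ≤ (m - M) * (ve + a * t) ^ 2 := mul_nonneg (by linarith) (sq_nonneg _)
  have f0 : (0:ℝ) < 2 * m * M := by
    have := mul_pos_of_neg_of_neg (show 2 * m < 0 by linarith) hM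
    linarith
  nlinarith [K, f1, f2, f3, f0, mul_pos f0 f0]

/-- Both cars still moving: positions keep the headway. -/
lemma main1 (xe ve a xl vl m M L t : ℝ) (ham : a ≤ m) (hm : m < 0) (hMm : M ≤ m)
    (hve : 0 ≤ ve) (hvl : 0 ≤ vl) (ht : 0 ≤ t)
    (hu : 0 ≤ ve + a * t) (hw : 0 ≤ vl + M * t)
    (h0 : xe + L ≤ xl)
    (K : m * vl ^ 2 - M * ve ^ 2 < 2 * m * M * (xl - xe - L)) :
    xe + ve * t + a / 2 * t ^ 2 + L ≤ xl + vl * t + M / 2 * t ^ 2 := by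
  have hM : M < 0 := lt_of_le_of_lt hMm hm
  by_cases hc : vl + M * t ≤ ve + a * t
  · exact main1A xe ve a xl vl m M L t ham hm hMm hve ht hu hw hc K
  push_neg at hc
  by_cases hv : ve ≤ vl
  · nlinarith [mul_nonneg ht (sub_nonneg.2 hv),
      mul_nonneg ht (show (0:ℝ) ≤ (vl + M * t) - (ve + a * t) by linarith)]
  push_neg at hv
  have htpos : 0 < t := by
    rcases ht.lt_or_eq with h | h
    · exact h
    · exfalso; rw [← h] at hc; simp at hc; linarith
  have hMa : 0 < M - a := by nlinarith [htpos, hc, hv]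
  set s := (ve - vl) / (M - a) with hs
  have hrel : (M - a) * s = ve - vl := by have hne : M - a ≠ 0 := hMa.ne'; rw [hs]; field_simp
  have hs0 : 0 ≤ s := div_nonneg (by linarith) (by linarith)
  have hst : s ≤ t := by nlinarith [hrel, hMa, hc]
  have hws : 0 ≤ vl + M * s := by
    have h1 : 0 ≤ (-M) * (t - s) := mul_nonneg (by linarith) (by linarith)
    nlinarith [hw, h1]
  have hus : 0 ≤ ve + a * s := by nlinarith [hrel, hws]
  have hcs : vl + M * s ≤ ve + a * s := by nlinarith [hrel]
  have hD := main1A xe ve a xl vl m M L s ham hm hMm hve hs0 hus hws hcs K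
  have hz : (vl - ve) + (M - a) * s = 0 := by linarith [hrel]
  have key : (t - s) * ((vl - ve) + (M - a) * s) = 0 := by rw [hz, mul_zero]
  nlinarith [hD, mul_nonneg hMa.le (sq_nonneg (t - s)), key]

lemma ego_barrier (xe ve a m t : ℝ) (ham : a ≤ m) (hm : m < 0) (hve : 0 ≤ ve)
    (ht : 0 ≤ t) (hu : 0 ≤ ve + a * t) :
    xe + ve * t + a / 2 * t ^ 2 - (ve + a * t) ^ 2 / (2 * m) ≤ xe - ve ^ 2 / (2 * m) := by
  have hm0 : m ≠ 0 := hm.ne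
  have e : (xe + ve * t + a / 2 * t ^ 2 - (ve + a * t) ^ 2 / (2 * m)) - (xe - ve ^ 2 / (2 * m))
      = ((m - a) * (t * (2 * ve + a * t))) / (2 * m) := by
    field_simp
    ring
  have hnum : 0 ≤ (m - a) * (t * (2 * ve + a * t)) :=
    mul_nonneg (by linarith) (mul_nonneg ht (by linarith))
  have hq : ((m - a) * (t * (2 * ve + a * t))) / (2 * m) ≤ 0 :=
    div_nonpos_of_nonneg_of_nonpos hnum (by linarith)
  linarith

lemma lead_const (xl vl M t : ℝ) (hM : M < 0) :
    xl + vl * t + M / 2 * t ^ 2 - (vl + M * t) ^ 2 / (2 * M) = xl - vl ^ 2 / (2 * M) := by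
  have hM0 : M ≠ 0 := hM.ne
  field_simp
  ring

lemma final_le (xe ve a m : ℝ) (ham : a ≤ m) (hm : m < 0) :
    xe - ve ^ 2 / (2 * a) ≤ xe - ve ^ 2 / (2 * m) := by
  have ha : a < 0 := lt_of_le_of_lt ham hm
  have hm0 : m ≠ 0 := hm.ne
  have ha0 : a ≠ 0 := ha.ne
  have e : (xe - ve ^ 2 / (2 * m)) - (xe - ve ^ 2 / (2 * a))
      = ve ^ 2 * (m - a) / (2 * a * m) := by
    field_simp
    ring
  have hq : 0 ≤ ve ^ 2 * (m - a) / (2 * a * m) :=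
    div_nonneg (mul_nonneg (sq_nonneg _) (by linarith)) (by nlinarith)
  linarith

/-- `safe_back` is an inductive invariant of the braking dynamics. -/
theorem safe_back_invariant (xe ve ae xl vl Bmin Bmax L : ℝ)
    (hBmax : Bmax ≤ Bmin) (hBmin : Bmin < 0) (hae : ae ≤ Bmin)
    (hve : 0 ≤ ve) (hvl : 0 ≤ vl) (hL : 0 < L)
    (hinit : xe + L ≤ xl)
    (hstop : xe - ve ^ 2 / (2 * Bmin) + L < xl - vl ^ 2 / (2 * Bmax)) :
    ∀ t : ℝ, 0 ≤ t →
      brakePos xe ve ae t + L ≤ brakePos xl vl Bmax t ∧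
      brakePos xe ve ae t - (brakeVel ve ae t) ^ 2 / (2 * Bmin) + L
        < brakePos xl vl Bmax t - (brakeVel vl Bmax t) ^ 2 / (2 * Bmax) := by
  intro t ht
  have hM : Bmax < 0 := lt_of_le_of_lt hBmax hBmin
  have ha : ae < 0 := lt_of_le_of_lt hae hBmin
  have hm0 : Bmin ≠ 0 := hBmin.ne
  have hM0 : Bmax ≠ 0 := hM.ne
  have ha0 : ae ≠ 0 := ha.ne
  have hprod : (0:ℝ) < 2 * Bmin * Bmax := by
    have := mul_pos_of_neg_of_neg (show 2 * Bmin < 0 by linarith) hM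
    linarith
  have K : Bmin * vl ^ 2 - Bmax * ve ^ 2 < 2 * Bmin * Bmax * (xl - xe - L) := by
    have h := mul_lt_mul_of_pos_right hstop hprod
    have e1 : (xe - ve ^ 2 / (2 * Bmin) + L) * (2 * Bmin * Bmax)
        = (xe + L) * (2 * Bmin * Bmax) - ve ^ 2 * Bmax := by field_simp; ring
    have e2 : (xl - vl ^ 2 / (2 * Bmax)) * (2 * Bmin * Bmax)
        = xl * (2 * Bmin * Bmax) - vl ^ 2 * Bmin := by field_simp
    rw [e1, e2] at h
    nlinarith [h]
  by_cases he : t ≤ -ve / ae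
  · have hu : 0 ≤ ve + ae * t := by
      have h2 : -ve ≤ t * ae := (le_div_iff_of_neg ha).1 he
      linarith
    have hbe := ego_barrier xe ve ae Bmin t hae hBmin hve ht hu
    by_cases hl : t ≤ -vl / Bmax
    · have hw : 0 ≤ vl + Bmax * t := by
        have h2 : -vl ≤ t * Bmax := (le_div_iff_of_neg hM).1 hl
        linarith
      simp only [brakePos, brakeVel, if_pos he, if_pos hl]
      constructor
      · exact main1 xe ve ae xl vl Bmin Bmax L t hae hBmin hBmax hve hvl ht hu hw hinit K
      · rw [lead_const xl vl Bmax t hM]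
        linarith
    · simp only [brakePos, brakeVel, if_pos he, if_neg hl]
      have hnn : (ve + ae * t) ^ 2 / (2 * Bmin) ≤ 0 :=
        div_nonpos_of_nonneg_of_nonpos (sq_nonneg _) (by linarith)
      constructor
      · linarith
      · norm_num
        linarith
  · push_neg at he
    have hu' : ve + ae * t < 0 := by
      have h2 : t * ae < -ve := (div_lt_iff_of_neg ha).1 he
      linarith
    have hfin := final_le xe ve ae Bmin hae hBmin
    have hte0 : 0 ≤ -ve / ae := by
      rw [div_nonneg_iff]
      right
      constructor <;> linarith
    have htet : -ve / ae ≤ t := he.le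
    have hue : ve + ae * (-ve / ae) = 0 := by field_simp; ring
    have efin : xe + ve * (-ve / ae) + ae / 2 * (-ve / ae) ^ 2 = xe - ve ^ 2 / (2 * ae) := by
      field_simp
      ring
    by_cases hl : t ≤ -vl / Bmax
    · have hw : 0 ≤ vl + Bmax * t := by
        have h2 : -vl ≤ t * Bmax := (le_div_iff_of_neg hM).1 hl
        linarith
      have hwte : 0 ≤ vl + Bmax * (-ve / ae) := by
        have h1 : 0 ≤ (-Bmax) * (t - (-ve / ae)) := mul_nonneg (by linarith) (by linarith)
        nlinarith [hw, h1]
      have hmain := main1 xe ve ae xl vl Bmin Bmax L (-ve / ae) hae hBmin hBmax hve hvl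
        hte0 (le_of_eq hue.symm) hwte hinit K
      have pmono : xl + vl * (-ve / ae) + Bmax / 2 * (-ve / ae) ^ 2
          ≤ xl + vl * t + Bmax / 2 * t ^ 2 := by
        nlinarith [mul_nonneg (sub_nonneg.2 htet) hw, mul_nonneg (sub_nonneg.2 htet) hwte]
      simp only [brakePos, brakeVel, if_neg (not_le.2 he), if_pos hl]
      constructor
      · linarith
      · rw [lead_const xl vl Bmax t hM]
        norm_num
        linarith
    · simp only [brakePos, brakeVel, if_neg (not_le.2 he), if_neg hl]
      constructor
      · linarith
      · norm_num
        linarith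
end

section
/- If the ego car (behind) has velocity v_e ≥ 0, acceleration a with B_min ≤ a and v_e + a·T < 0 (it stops within the reaction time T > 0), B_min < 0, and x_e - v_e²/(2a) + L < x_l - v_l²/(2·B_max) with a < 0, x_e + L ≤ x_l, v_l ≥ 0, B_max ≤ B_min, then for all t ≥ 0 the ego car evolving at acceleration a (clamped at stop) and the front car braking at B_max (clamped at stop) remain at separation at least L. -/
private lemma parab_le_stop (v c t : ℝ) (hc : c < 0) :
    v * t + (c / 2) * t ^ 2 ≤ -(v ^ 2 / (2 * c)) := by
  have key : -(v ^ 2 / (2 * c)) - (v * t + (c / 2) * t ^ 2)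
      = -((v + c * t) ^ 2 / (2 * c)) := by
    have hc' : c ≠ 0 := ne_of_lt hc
    field_simp
    ring
  have h2 : (v + c * t) ^ 2 / (2 * c) ≤ 0 :=
    div_nonpos_of_nonneg_of_nonpos (sq_nonneg _) (by linarith)
  linarith [key]

private lemma convex_quad (c0 c1 c2 s t : ℝ) (hc2 : 0 ≤ c2) (h0 : c0 ≤ 0)
    (hs : c0 + c1 * s + c2 * s ^ 2 ≤ 0) (ht0 : 0 ≤ t) (hts : t ≤ s) :
    c0 + c1 * t + c2 * t ^ 2 ≤ 0 := by
  rcases le_or_gt (c1 + c2 * s) 0 with h | h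
  · nlinarith [mul_nonneg (mul_nonneg hc2 ht0) (sub_nonneg.2 hts),
      mul_nonpos_of_nonpos_of_nonneg h ht0]
  · nlinarith [mul_nonneg h.le (sub_nonneg.2 hts),
      mul_nonneg (mul_nonneg hc2 ht0) (sub_nonneg.2 hts)]

set_option maxHeartbeats 1600000 in
/-- If the ego car stops within the reaction time, its own stopping distance
suffices: separation at least `L` is maintained for all time. -/
theorem ego_stops_within_cycle (xe ve a xl vl Bmin Bmax T L : ℝ)
    (hve : 0 ≤ ve) (hvl : 0 ≤ vl) (hBmax : Bmax ≤ Bmin) (hBmin : Bmin < 0)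
    (hT : 0 < T) (hL : 0 < L) (ha : a < 0) (haB : Bmin ≤ a)
    (hstopT : ve + a * T < 0)
    (hinit : xe + L ≤ xl)
    (hstop : xe - ve ^ 2 / (2 * a) + L < xl - vl ^ 2 / (2 * Bmax)) :
    ∀ t : ℝ, 0 ≤ t → brakePos xe ve a t + L ≤ brakePos xl vl Bmax t := by
  intro t ht
  have hBmax0 : Bmax < 0 := lt_of_le_of_lt hBmax hBmin
  have hBa : Bmax ≤ a := hBmax.trans haB
  have ha' : a ≠ 0 := ne_of_lt ha
  have hb' : Bmax ≠ 0 := ne_of_lt hBmax0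
  obtain ⟨u, hu_def⟩ : ∃ u : ℝ, u = -ve / a := ⟨_, rfl⟩
  obtain ⟨w, hw_def⟩ : ∃ w : ℝ, w = -vl / Bmax := ⟨_, rfl⟩
  have hu : a * u = -ve := by rw [hu_def]; field_simp
  have hw : Bmax * w = -vl := by rw [hw_def]; field_simp
  have hu0 : 0 ≤ u := by
    rw [hu_def, div_nonneg_iff]; right; exact ⟨by linarith, ha.le⟩
  have hw0 : 0 ≤ w := by
    rw [hw_def, div_nonneg_iff]; right; exact ⟨by linarith, hBmax0.le⟩
  have hA : ve ^ 2 / (2 * a) = (a / 2) * u ^ 2 := by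
    have hveu : ve = -(a * u) := by linarith
    rw [hveu]; field_simp
  have hB : vl ^ 2 / (2 * Bmax) = (Bmax / 2) * w ^ 2 := by
    have hwv : vl = -(Bmax * w) := by linarith
    rw [hwv]; field_simp
  simp only [brakePos]
  rw [← hu_def, ← hw_def]
  rcases le_or_gt t w with h2 | h2
  · rw [if_pos h2]
    have hbt : -Bmax * t ≤ vl := by nlinarith [mul_le_mul_of_nonneg_left h2 (by linarith : (0:ℝ) ≤ -Bmax)]
    rcases le_or_gt t u with h1 | h1
    · rw [if_pos h1]
      rcases le_total (-Bmax * u) vl with hbr | hbr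
      · -- ego stops no later than lead: direct slope argument
        nlinarith [mul_nonneg (mul_nonneg ht (sub_nonneg.2 h1)) (by linarith : (0:ℝ) ≤ a - Bmax),
          mul_nonneg ht (by linarith : (0:ℝ) ≤ vl + Bmax * u),
          mul_nonneg (mul_nonneg ht hu0) (by linarith : (0:ℝ) ≤ a - Bmax)]
      · -- lead stops no later than ego: convexity on [0, w]
        have hvlw : vl * w = -Bmax * w ^ 2 := by
          rw [show vl = -(Bmax * w) by linarith]; ring
        have hpw := parab_le_stop ve a w ha
        have hs : (xe + L - xl) + (ve - vl) * w + ((a - Bmax) / 2) * w ^ 2 ≤ 0 := by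
          nlinarith [hpw, hstop, hA, hB, hvlw]
        have hcq := convex_quad (xe + L - xl) (ve - vl) ((a - Bmax) / 2) w t
          (by linarith) (by linarith) hs ht h2
        nlinarith [hcq]
    · rw [if_neg (not_le.2 h1)]
      rw [hA]
      nlinarith [mul_nonneg ht (by linarith : (0:ℝ) ≤ vl + Bmax * t),
        mul_nonneg (by linarith : (0:ℝ) ≤ a - Bmax) (sq_nonneg u),
        mul_nonneg (by linarith : (0:ℝ) ≤ -Bmax)
          (mul_nonneg (by linarith : (0:ℝ) ≤ t - u) (by linarith : (0:ℝ) ≤ t + u))]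
  · rw [if_neg (not_le.2 h2)]
    rcases le_or_gt t u with h1 | h1
    · rw [if_pos h1]
      have := parab_le_stop ve a t ha
      linarith
    · rw [if_neg (not_le.2 h1)]
      linarith
end
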